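/- In the Mallows model with fixed θ > 1 and fixed integer k ≥ 1, the success probability converges: lim_{N→∞} W(N,k)/[N]_θ! = (θ−1)·((θ^k−1)/θ^{k+1})·Σ_{i=k}^{∞} 1/(θ^i−1), and the infinite series converges. -/

import Mathlib

set_option maxHeartbeats 1000000


/-- Number of left-to-right maxima of the permutation `π` (one-line notation
`i ↦ π i`): positions `j` such that `π i < π j` for all `i < j`. -/
def lrmaxCount {N : ℕ} (π : Equiv.Perm (Fin N)) : ℕ :=
  (Finset.univ.filter (fun j : Fin N => ∀ i, i < j → π i < π j)).card

/-- Number of inversions of `π`: pairs of positions `i < j` with `π i > π j`. -/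
def invCount {N : ℕ} (π : Equiv.Perm (Fin N)) : ℕ :=
  (Finset.univ.filter (fun p : Fin N × Fin N => p.1 < p.2 ∧ π p.2 < π p.1)).card

/-- Position `j` is a left-to-right maximum of `π`. -/
def IsLRMax {N : ℕ} (π : Equiv.Perm (Fin N)) (j : Fin N) : Prop :=
  ∀ i, i < j → π i < π j

/-- `π` is `k`-winnable: the positional strategy that rejects the first `k`
candidates (positions `0,…,k-1`) and accepts the next left-to-right maximum
thereafter selects the position of the maximal value. -/
def KWinnable {N : ℕ} (k : ℕ) (π : Equiv.Perm (Fin N)) : Prop :=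
  ∃ j : Fin N, k ≤ (j : ℕ) ∧ IsLRMax π j ∧ (∀ i, π i ≤ π j) ∧
    ∀ i : Fin N, k ≤ (i : ℕ) → i < j → ¬ IsLRMax π i

open Classical in
/-- Ewens-weighted count of `k`-winnable permutations:
`W(N,k) = Σ_{k-winnable π ∈ S_N} θ^{lrmax(π)}`. -/
noncomputable def W (R : Type*) [CommRing R] (N k : ℕ) (θ : R) : R :=
  ∑ π ∈ Finset.univ.filter (fun π : Equiv.Perm (Fin N) => KWinnable k π),
    θ ^ lrmaxCount π

/-- θ-analogue `[n]_θ = 1 + θ + ⋯ + θ^{n-1}`. -/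
def tA (n : ℕ) (θ : ℝ) : ℝ := ∑ m ∈ Finset.range n, θ ^ m

/-- θ-factorial `[m]_θ! = [m]_θ [m-1]_θ ⋯ [1]_θ`. -/
def qfact (m : ℕ) (θ : ℝ) : ℝ := ∏ n ∈ Finset.range m, tA (n + 1) θ

open Classical in
/-- Mallows-weighted count of `k`-winnable permutations:
`W(N,k) = Σ_{k-winnable π ∈ S_N} θ^{inv(π)}`. -/
noncomputable def WM (N k : ℕ) (θ : ℝ) : ℝ :=
  ∑ π ∈ Finset.univ.filter (fun π : Equiv.Perm (Fin N) => KWinnable k π),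
    θ ^ invCount π


open Finset

/-- Left inversion count at position j. -/
def codeNat {N : ℕ} (π : Equiv.Perm (Fin N)) (j : Fin N) : ℕ :=
  (univ.filter (fun i : Fin N => i < j ∧ π j < π i)).card

lemma codeNat_le {N : ℕ} (π : Equiv.Perm (Fin N)) (j : Fin N) :
    codeNat π j ≤ (j : ℕ) := by
  classical
  calc codeNat π j ≤ (Finset.Iio j).card := by
        apply Finset.card_le_card
        intro i hi
        simp only [mem_filter, mem_univ, true_and] at hi
        simpa using hi.1
    _ = (j : ℕ) := Fin.card_Iio j

lemma invCount_eq_sum {N : ℕ} (π : Equiv.Perm (Fin N)) :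
    invCount π = ∑ j : Fin N, codeNat π j := by
  classical
  rw [invCount]
  rw [Finset.card_eq_sum_card_fiberwise
    (f := fun p : Fin N × Fin N => p.2) (t := univ) (fun _ _ => mem_univ _)]
  refine Finset.sum_congr rfl fun j _ => ?_
  rw [codeNat]
  apply Finset.card_nbij' (fun p => p.1) (fun i => (i, j))
  · intro p hp
    simp only [mem_coe, mem_filter, mem_univ, true_and] at hp ⊢
    obtain ⟨⟨h1, h2⟩, h3⟩ := hp
    subst h3; exact ⟨h1, h2⟩
  · intro i hi
    simp only [mem_coe, mem_filter, mem_univ, true_and] at hi ⊢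
    exact ⟨⟨hi.1, hi.2⟩, trivial⟩
  · intro p hp
    simp only [mem_coe, mem_filter, mem_univ, true_and] at hp
    exact Prod.ext rfl hp.2.symm
  · intro i _; rfl

lemma isLRMax_iff {N : ℕ} (π : Equiv.Perm (Fin N)) (j : Fin N) :
    IsLRMax π j ↔ codeNat π j = 0 := by
  classical
  rw [codeNat, Finset.card_eq_zero, Finset.filter_eq_empty_iff]
  constructor
  · intro h i _
    rintro ⟨hij, hlt⟩
    exact absurd (h i hij) (not_lt.2 hlt.le)
  · intro h i hij
    have := h (mem_univ i)
    have hne : π i ≠ π j := fun e => (ne_of_lt hij) (π.injective e)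
    rcases lt_or_gt_of_ne hne with h1 | h1
    · exact h1
    · exact absurd ⟨hij, h1⟩ this

lemma max_iff {N : ℕ} (π : Equiv.Perm (Fin N)) (j : Fin N) :
    (∀ i, π i ≤ π j) ↔ (codeNat π j = 0 ∧ ∀ i, j < i → codeNat π i ≠ 0) := by
  classical
  constructor
  · intro h
    constructor
    · rw [← isLRMax_iff]
      intro i hij
      exact lt_of_le_of_ne (h i) (fun e => (ne_of_lt hij) (π.injective e))
    · intro i hji hc
      rw [← isLRMax_iff] at hc
      have h1 : π j < π i := hc j hji
      exact absurd (h i) (not_le.2 h1)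
  · rintro ⟨h0, h1⟩ i
    -- let m be position of max value
    obtain ⟨m, -, hm⟩ := Finset.exists_max_image univ (fun i => π i) ⟨j, mem_univ j⟩
    rcases lt_trichotomy m j with h2 | h2 | h2
    · -- codeNat π j = 0 means everything before j is smaller
      rw [← isLRMax_iff] at h0
      have := h0 m h2
      exact le_trans (hm i (mem_univ i)) this.le
    · subst h2; exact hm i (mem_univ i)
    · exfalso
      apply h1 m h2
      rw [← isLRMax_iff]
      intro l hl
      exact lt_of_le_of_ne (hm l (mem_univ l)) (fun e => (ne_of_lt hl) (π.injective e))

lemma kWinnable_iff {N : ℕ} (k : ℕ) (π : Equiv.Perm (Fin N)) :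
    KWinnable k π ↔ ∃ j : Fin N, k ≤ (j : ℕ) ∧ codeNat π j = 0 ∧
      ∀ i : Fin N, k ≤ (i : ℕ) → i ≠ j → codeNat π i ≠ 0 := by
  constructor
  · rintro ⟨j, hkj, hlr, hmax, hno⟩
    refine ⟨j, hkj, (isLRMax_iff π j).1 hlr, ?_⟩
    intro i hki hij
    rcases lt_or_gt_of_ne hij with h | h
    · intro hc
      exact hno i hki h ((isLRMax_iff π i).2 hc)
    · exact ((max_iff π j).1 hmax).2 i h
  · rintro ⟨j, hkj, h0, hother⟩
    refine ⟨j, hkj, (isLRMax_iff π j).2 h0, ?_, ?_⟩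
    · rw [max_iff]
      refine ⟨h0, fun i hji => ?_⟩
      exact hother i (le_trans hkj (le_of_lt hji)) (ne_of_gt hji)
    · intro i hki hij hc
      exact hother i hki (ne_of_lt hij) ((isLRMax_iff π i).1 hc)

section inj
variable {N : ℕ}

/-- count of all positions with value above v -/
def Iv (π : Equiv.Perm (Fin N)) (v : Fin N) : ℕ :=
  (univ.filter (fun i : Fin N => v < π i)).card

/-- count of positions after j with value above v -/
def Uv (π : Equiv.Perm (Fin N)) (j : Fin N) (v : Fin N) : ℕ :=
  (univ.filter (fun i : Fin N => j < i ∧ v < π i)).card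

lemma Iv_eq (π : Equiv.Perm (Fin N)) (j : Fin N) :
    Iv π (π j) = codeNat π j + Uv π j (π j) := by
  classical
  rw [Iv, codeNat, Uv, ← Finset.card_union_of_disjoint]
  · congr 1
    ext i
    simp only [mem_filter, mem_univ, true_and, mem_union]
    constructor
    · intro h
      rcases lt_trichotomy i j with h1 | h1 | h1
      · exact Or.inl ⟨h1, h⟩
      · exact absurd h (by subst h1; exact lt_irrefl _)
      · exact Or.inr ⟨h1, h⟩
    · rintro (⟨-, h⟩ | ⟨-, h⟩) <;> exact h
  · rw [Finset.disjoint_filter]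
    rintro i - ⟨h1, -⟩ ⟨h2, -⟩
    exact absurd (h1.trans h2) (lt_irrefl i)

lemma Iv_eq_card_Ioi (π : Equiv.Perm (Fin N)) (v : Fin N) :
    Iv π v = (Finset.Ioi v).card := by
  classical
  apply Finset.card_nbij' (fun i => π i) (fun w => π.symm w)
  · intro i hi
    simp only [mem_coe, mem_filter, mem_univ, true_and, Finset.mem_Ioi] at *
    exact hi
  · intro w hw
    simp only [mem_coe, mem_filter, mem_univ, true_and, Finset.mem_Ioi] at *
    simpa using hw
  · intro i _; simp
  · intro w _; simp

lemma Uv_congr {π π' : Equiv.Perm (Fin N)} (j : Fin N)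
    (htail : ∀ i, j < i → π i = π' i) (v : Fin N) : Uv π j v = Uv π' j v := by
  classical
  unfold Uv
  congr 1
  apply Finset.filter_congr
  intro i _
  constructor
  · rintro ⟨h1, h2⟩; exact ⟨h1, (htail i h1) ▸ h2⟩
  · rintro ⟨h1, h2⟩; exact ⟨h1, (htail i h1) ▸ h2⟩

lemma strict_key (π : Equiv.Perm (Fin N)) (j : Fin N) {v v' : Fin N}
    (hvv : v < v') (hpos : ¬ (j < π.symm v')) :
    Iv π v' + Uv π j v < Iv π v + Uv π j v' := by
  classical
  have hsplitI : Iv π v = Iv π v' +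
      (univ.filter (fun i : Fin N => v < π i ∧ ¬ v' < π i)).card := by
    rw [Iv, Iv, ← Finset.card_union_of_disjoint]
    · congr 1
      ext i
      simp only [mem_filter, mem_univ, true_and, mem_union]
      constructor
      · intro h
        by_cases hc : v' < π i
        · exact Or.inl hc
        · exact Or.inr ⟨h, hc⟩
      · rintro (h | ⟨h, -⟩)
        · exact hvv.trans h
        · exact h
    · rw [Finset.disjoint_filter]
      rintro i - h1 ⟨-, h2⟩
      exact h2 h1
  have hsplitU : Uv π j v = Uv π j v' +
      (univ.filter (fun i : Fin N => (j < i ∧ v < π i) ∧ ¬ v' < π i)).card := by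
    rw [Uv, Uv, ← Finset.card_union_of_disjoint]
    · congr 1
      ext i
      simp only [mem_filter, mem_univ, true_and, mem_union]
      constructor
      · rintro ⟨h0, h⟩
        by_cases hc : v' < π i
        · exact Or.inl ⟨h0, hc⟩
        · exact Or.inr ⟨⟨h0, h⟩, hc⟩
      · rintro (⟨h0, h⟩ | ⟨⟨h0, h⟩, -⟩)
        · exact ⟨h0, hvv.trans h⟩
        · exact ⟨h0, h⟩
    · rw [Finset.disjoint_filter]
      rintro i - ⟨-, h1⟩ ⟨-, h2⟩
      exact h2 h1
  rw [hsplitI, hsplitU]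
  have hcard : (univ.filter (fun i : Fin N => (j < i ∧ v < π i) ∧ ¬ v' < π i)).card <
      (univ.filter (fun i : Fin N => v < π i ∧ ¬ v' < π i)).card := by
    apply Finset.card_lt_card
    rw [Finset.ssubset_iff_of_subset]
    · refine ⟨π.symm v', ?_, ?_⟩
      · simp only [mem_filter, mem_univ, true_and]
        constructor
        · simpa using hvv
        · simp
      · simp only [mem_filter, mem_univ, true_and, not_and]
        rintro ⟨h1, -⟩
        exact (hpos h1).elim
    · intro i hi
      simp only [mem_filter, mem_univ, true_and] at hi ⊢
      exact ⟨hi.1.2, hi.2⟩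
  linarith

lemma code_det {π π' : Equiv.Perm (Fin N)} (j : Fin N)
    (htail : ∀ i, j < i → π i = π' i)
    (hcode : codeNat π j = codeNat π' j) : π j = π' j := by
  classical
  have hIv : ∀ w, Iv π' w = Iv π w := by
    intro w; rw [Iv_eq_card_Ioi, Iv_eq_card_Ioi]
  have hUv : ∀ w, Uv π' j w = Uv π j w := Uv_congr j (fun i h => (htail i h).symm)
  have heq : Iv π (π j) + Uv π j (π' j) = Iv π (π' j) + Uv π j (π j) := by
    have h1 := Iv_eq π j
    have h2 := Iv_eq π' j
    rw [hIv, hUv] at h2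
    omega
  by_contra hne
  rcases lt_or_gt_of_ne hne with h | h
  · -- π j < π' j
    have hpos : ¬ (j < π.symm (π' j)) := by
      intro hc
      have := htail (π.symm (π' j)) hc
      simp only [Equiv.apply_symm_apply] at this
      have : π.symm (π' j) = j := π'.injective this.symm
      rw [this] at hc; exact lt_irrefl _ hc
    have := strict_key π j h hpos
    omega
  · -- π' j < π j
    have hpos : ¬ (j < π.symm (π j)) := by simp
    have := strict_key π j h hpos
    omega

def codeMap {N : ℕ} (π : Equiv.Perm (Fin N)) : ∀ j : Fin N, Fin ((j : ℕ) + 1) :=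
  fun j => ⟨codeNat π j, Nat.lt_succ_of_le (codeNat_le π j)⟩

lemma codeMap_injective {N : ℕ} : Function.Injective (codeMap (N := N)) := by
  intro π π' h
  have hcode : ∀ j, codeNat π j = codeNat π' j := by
    intro j
    have := congrFun h j
    simpa [codeMap, Fin.ext_iff] using this
  have key : ∀ m : ℕ, ∀ j : Fin N, N ≤ (j : ℕ) + m + 1 → π j = π' j := by
    intro m
    induction m with
    | zero =>
      intro j hj
      apply code_det j _ (hcode j)
      intro i hi
      exfalso
      have h1 : (j : ℕ) < (i : ℕ) := hi
      have h2 : (i : ℕ) < N := i.isLt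
      omega
    | succ m ih =>
      intro j hj
      apply code_det j _ (hcode j)
      intro i hi
      apply ih
      have h1 : (j : ℕ) < (i : ℕ) := hi
      omega
  apply Equiv.ext
  intro j
  exact key N j (by have := j.isLt; omega)

lemma prod_fin_succ_eq_factorial (N : ℕ) :
    ∏ j : Fin N, ((j : ℕ) + 1) = Nat.factorial N := by
  rw [Fin.prod_univ_eq_prod_range (fun j => j + 1) N]
  induction N with
  | zero => simp
  | succ n ih => rw [Finset.prod_range_succ, ih, Nat.factorial_succ, mul_comm]

lemma codeMap_bijective {N : ℕ} : Function.Bijective (codeMap (N := N)) := by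
  rw [Fintype.bijective_iff_injective_and_card]
  refine ⟨codeMap_injective, ?_⟩
  rw [Fintype.card_perm, Fintype.card_pi]
  simp only [Fintype.card_fin]
  rw [prod_fin_succ_eq_factorial]

section eval
variable {N k : ℕ} {θ : ℝ}

/-- winning condition on codes -/
def Qc (k : ℕ) {N : ℕ} (c : ∀ j : Fin N, Fin ((j : ℕ) + 1)) : Prop :=
  ∃ j : Fin N, k ≤ (j : ℕ) ∧ c j = 0 ∧
    ∀ i : Fin N, k ≤ (i : ℕ) → i ≠ j → c i ≠ 0

open Classical in
lemma WM_eq_codeSum (N k : ℕ) (θ : ℝ) :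
    WM N k θ = ∑ c ∈ univ.filter (fun c : ∀ j : Fin N, Fin ((j : ℕ) + 1) => Qc k c),
      θ ^ (∑ j : Fin N, ((c j : ℕ))) := by
  rw [WM]
  apply Finset.sum_bij (fun π _ => codeMap π)
  · intro π hπ
    simp only [mem_filter, mem_univ, true_and] at hπ ⊢
    rw [kWinnable_iff] at hπ
    obtain ⟨j, h1, h2, h3⟩ := hπ
    refine ⟨j, h1, ?_, ?_⟩
    · simp [codeMap, Fin.ext_iff, h2]
    · intro i hki hij
      simp only [codeMap, Fin.ext_iff, ne_eq, Fin.val_zero]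
      exact h3 i hki hij
  · intro π _ π' _ h
    exact codeMap_injective h
  · intro c hc
    simp only [mem_filter, mem_univ, true_and] at hc
    obtain ⟨π, hπ⟩ := codeMap_bijective.2 c
    refine ⟨π, ?_, hπ⟩
    simp only [mem_filter, mem_univ, true_and]
    rw [kWinnable_iff]
    obtain ⟨j, h1, h2, h3⟩ := hc
    refine ⟨j, h1, ?_, ?_⟩
    · have := congrFun hπ j ▸ h2
      simpa [codeMap, Fin.ext_iff] using this
    · intro i hki hij hzero
      apply h3 i hki hij
      rw [← hπ]
      simp [codeMap, Fin.ext_iff, hzero]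
  · intro π _
    rw [invCount_eq_sum]
    congr 1

/-- per-coordinate allowed sets -/
noncomputable def Sfin (k : ℕ) {N : ℕ} (j i : Fin N) : Finset (Fin ((i : ℕ) + 1)) :=
  if k ≤ (i : ℕ) then (if i = j then {0} else ({0} : Finset (Fin ((i : ℕ) + 1)))ᶜ)
  else univ

/-- coordinate weights -/
noncomputable def wgt (k : ℕ) (θ : ℝ) {N : ℕ} (j i : Fin N) : ℝ :=
  if k ≤ (i : ℕ) then (if i = j then 1 else tA ((i : ℕ) + 1) θ - 1)
  else tA ((i : ℕ) + 1) θ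

lemma sum_pow_univ (n : ℕ) (θ : ℝ) :
    ∑ x : Fin (n + 1), θ ^ (x : ℕ) = tA (n + 1) θ := by
  rw [tA, Fin.sum_univ_eq_sum_range (fun m => θ ^ m) (n + 1)]

lemma sum_pow_Sfin (j i : Fin N) (θ : ℝ) :
    ∑ x ∈ Sfin k j i, θ ^ (x : ℕ) = wgt k θ j i := by
  rw [Sfin, wgt]
  by_cases h1 : k ≤ (i : ℕ) <;> simp only [h1, if_true, if_false]
  · by_cases h2 : i = j <;> simp only [h2, if_true, if_false]
    · simp
    · have := Finset.sum_compl_add_sum ({0} : Finset (Fin ((i : ℕ) + 1)))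
        (fun x => θ ^ (x : ℕ))
      rw [sum_pow_univ] at this
      simp only [Finset.sum_singleton, Fin.val_zero, pow_zero] at this
      linarith
  · exact sum_pow_univ i θ

open Classical in
lemma codeSum_eq (N k : ℕ) (θ : ℝ) :
    ∑ c ∈ univ.filter (fun c : ∀ j : Fin N, Fin ((j : ℕ) + 1) => Qc k c),
      θ ^ (∑ j : Fin N, ((c j : ℕ)))
    = ∑ j ∈ univ.filter (fun j : Fin N => k ≤ (j : ℕ)), ∏ i : Fin N, wgt k θ j i := by
  have hfil : univ.filter (fun c : ∀ j : Fin N, Fin ((j : ℕ) + 1) => Qc k c) =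
      (univ.filter (fun j : Fin N => k ≤ (j : ℕ))).biUnion
        (fun j => Fintype.piFinset (Sfin k j)) := by
    ext c
    simp only [mem_filter, mem_univ, true_and, mem_biUnion, Fintype.mem_piFinset]
    constructor
    · rintro ⟨j, h1, h2, h3⟩
      refine ⟨j, by simp [h1], fun i => ?_⟩
      rw [Sfin]
      by_cases hki : k ≤ (i : ℕ)
      · simp only [hki, if_true]
        by_cases hij : i = j
        · subst hij; simp [h2]
        · simp only [hij, if_false, Finset.mem_compl, Finset.mem_singleton]
          exact h3 i hki hij
      · simp [hki]
    · rintro ⟨j, hj, h⟩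
      refine ⟨j, hj, ?_, ?_⟩
      · have := h j
        simp only [Sfin, hj, if_true, if_pos rfl, Finset.mem_singleton] at this
        exact this
      · intro i hki hij
        have := h i
        simp only [Sfin, hki, if_true, hij, if_false, Finset.mem_compl,
          Finset.mem_singleton] at this
        exact this
  rw [hfil, Finset.sum_biUnion]
  · refine Finset.sum_congr rfl fun j hj => ?_
    calc ∑ c ∈ Fintype.piFinset (Sfin k j), θ ^ (∑ i : Fin N, ((c i : ℕ)))
        = ∑ c ∈ Fintype.piFinset (Sfin k j), ∏ i : Fin N, θ ^ ((c i : ℕ)) := by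
          refine Finset.sum_congr rfl fun c _ => ?_
          rw [Finset.prod_pow_eq_pow_sum]
      _ = ∏ i : Fin N, ∑ x ∈ Sfin k j i, θ ^ (x : ℕ) := (Finset.prod_univ_sum (Sfin k j) (fun i (x : Fin ((i:ℕ)+1)) => θ ^ (x:ℕ))).symm
      _ = ∏ i : Fin N, wgt k θ j i := by
          exact Finset.prod_congr rfl fun i _ => sum_pow_Sfin j i θ
  · -- pairwise disjoint
    intro j hj j' hj' hne
    simp only [Finset.disjoint_left]
    intro c hc hc'
    rw [Fintype.mem_piFinset] at hc hc'
    have h1 := hc j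
    have h2 := hc' j
    simp only [mem_coe, mem_filter, mem_univ, true_and] at hj hj'
    simp only [Sfin, hj, if_true, if_pos rfl, Finset.mem_singleton] at h1
    have hne' : j ≠ j' := hne
    simp only [Sfin, hj, if_true, if_neg hne', Finset.mem_compl,
      Finset.mem_singleton] at h2
    exact h2 h1

end eval

section ratio
variable {θ : ℝ} {k N : ℕ}

lemma tA_eq (hθ : 1 < θ) (n : ℕ) : tA n θ = (θ ^ n - 1) / (θ - 1) := by
  rw [tA, geom_sum_eq (ne_of_gt hθ)]

lemma pow_sub_one_pos (hθ : 1 < θ) {n : ℕ} (hn : 1 ≤ n) : 0 < θ ^ n - 1 := by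
  have : 1 < θ ^ n := one_lt_pow₀ hθ (by omega)
  linarith

lemma tA_pos (hθ : 1 < θ) (n : ℕ) (hn : 1 ≤ n) : 0 < tA n θ := by
  rw [tA_eq hθ]
  exact div_pos (pow_sub_one_pos hθ hn) (by linarith)

lemma g_pos (hθ : 1 < θ) {n : ℕ} (hn : 1 ≤ n) : 0 < tA (n + 1) θ - 1 := by
  rw [tA_eq hθ]
  rw [lt_sub_iff_add_lt, zero_add, lt_div_iff₀ (by linarith : (0:ℝ) < θ - 1)]
  have h1 : 1 < θ ^ n := one_lt_pow₀ hθ (by omega)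
  have h2 : θ ^ n < θ ^ (n + 1) := by
    rw [pow_succ]
    nlinarith [pow_pos (by linarith : (0:ℝ) < θ) n]
  have h3 : θ ^ (n + 1) = θ ^ n * θ := pow_succ θ n
  nlinarith

lemma qfact_pos (hθ : 1 < θ) (m : ℕ) : 0 < qfact m θ := by
  rw [qfact]
  exact Finset.prod_pos fun n _ => tA_pos hθ (n + 1) (by omega)

open Classical in
lemma WM_Ico (hθ : 1 < θ) (hkN : k ≤ N) :
    WM N k θ = qfact k θ * ∑ j ∈ Finset.Ico k N,
      ∏ i ∈ Finset.Ico k N, (if i = j then 1 else tA (i + 1) θ - 1) := by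
  rw [WM_eq_codeSum, codeSum_eq]
  rw [Finset.mul_sum]
  apply Finset.sum_bij (fun (j : Fin N) _ => (j : ℕ))
  · intro j hj
    simp only [mem_filter, mem_univ, true_and] at hj
    simp [Finset.mem_Ico, hj, j.isLt]
  · intro j _ j' _ h
    exact Fin.ext h
  · intro n hn
    simp only [Finset.mem_Ico] at hn
    exact ⟨⟨n, hn.2⟩, by simp [mem_filter, hn.1], rfl⟩
  · intro j hj
    simp only [mem_filter, mem_univ, true_and] at hj
    -- product over Fin N of wgt = qfact k * product over Ico
    have hprod : ∏ i : Fin N, wgt k θ j i =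
        ∏ i ∈ Finset.range N, (if k ≤ i then (if i = (j : ℕ) then 1
          else tA (i + 1) θ - 1) else tA (i + 1) θ) := by
      rw [← Fin.prod_univ_eq_prod_range
        (fun i => if k ≤ i then (if i = (j : ℕ) then 1 else tA (i + 1) θ - 1)
          else tA (i + 1) θ) N]
      refine Finset.prod_congr rfl fun i _ => ?_
      rw [wgt]
      congr 2
      rw [Fin.ext_iff]
    rw [hprod, ← Finset.prod_range_mul_prod_Ico _ hkN]
    congr 1
    · rw [qfact]
      refine Finset.prod_congr rfl fun i hi => ?_
      simp only [Finset.mem_range] at hi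
      rw [if_neg (by omega)]
    · refine Finset.prod_congr rfl fun i hi => ?_
      simp only [Finset.mem_Ico] at hi
      rw [if_pos hi.1]

lemma prod_ite_erase (s : Finset ℕ) (g : ℕ → ℝ) {j : ℕ} (hj : j ∈ s)
    (hg : g j ≠ 0) :
    ∏ i ∈ s, (if i = j then 1 else g i) = (∏ i ∈ s, g i) / g j := by
  classical
  rw [← Finset.mul_prod_erase s _ hj, if_pos rfl, one_mul,
    ← Finset.mul_prod_erase s g hj, mul_comm (g j), mul_div_assoc, div_self hg,
    mul_one]
  refine Finset.prod_congr rfl fun i hi => ?_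
  rw [if_neg (Finset.ne_of_mem_erase hi)]

lemma ratio_eq (hθ : 1 < θ) (hk : 1 ≤ k) (hkN : k ≤ N) :
    WM N k θ / qfact N θ =
      (∏ i ∈ Finset.Ico k N, (θ * (θ ^ i - 1) / (θ ^ (i + 1) - 1))) *
      ∑ j ∈ Finset.Ico k N, ((θ - 1) / (θ * (θ ^ j - 1))) := by
  have hθ0 : (0:ℝ) < θ := by linarith
  have hqk : qfact k θ ≠ 0 := ne_of_gt (qfact_pos hθ k)
  have htApos : ∀ i ∈ Finset.Ico k N, 0 < tA (i + 1) θ :=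
    fun i _ => tA_pos hθ (i + 1) (by omega)
  have hgpos : ∀ i ∈ Finset.Ico k N, 0 < tA (i + 1) θ - 1 := by
    intro i hi
    simp only [Finset.mem_Ico] at hi
    exact g_pos hθ (le_trans hk hi.1)
  have hqN : qfact N θ = qfact k θ * ∏ i ∈ Finset.Ico k N, tA (i + 1) θ := by
    rw [qfact, qfact, Finset.prod_range_mul_prod_Ico _ hkN]
  rw [WM_Ico hθ hkN, hqN]
  rw [mul_div_mul_left _ _ hqk]
  have hsum : ∑ j ∈ Finset.Ico k N,
      ∏ i ∈ Finset.Ico k N, (if i = j then 1 else tA (i + 1) θ - 1)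
      = (∏ i ∈ Finset.Ico k N, (tA (i + 1) θ - 1)) *
        ∑ j ∈ Finset.Ico k N, (1 / (tA (j + 1) θ - 1)) := by
    rw [Finset.mul_sum]
    refine Finset.sum_congr rfl fun j hj => ?_
    rw [prod_ite_erase _ _ hj (ne_of_gt (hgpos j hj))]
    rw [mul_one_div]
  rw [hsum]
  rw [div_eq_iff (ne_of_gt (Finset.prod_pos htApos)), mul_comm]
  have h1 : ∀ i ∈ Finset.Ico k N,
      (θ * (θ ^ i - 1) / (θ ^ (i + 1) - 1)) * tA (i + 1) θ = tA (i + 1) θ - 1 := by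
    intro i hi
    simp only [Finset.mem_Ico] at hi
    have hi1 : 1 ≤ i := le_trans hk hi.1
    have hne1 : θ ^ (i + 1) - 1 ≠ 0 := ne_of_gt (pow_sub_one_pos hθ (by omega))
    have hne2 : θ - 1 ≠ 0 := by linarith
    rw [tA_eq hθ]
    field_simp
    ring
  have h2 : ∀ j ∈ Finset.Ico k N,
      (θ - 1) / (θ * (θ ^ j - 1)) = 1 / (tA (j + 1) θ - 1) := by
    intro j hj
    simp only [Finset.mem_Ico] at hj
    have hj1 : 1 ≤ j := le_trans hk hj.1
    have hne1 : θ ^ j - 1 ≠ 0 := ne_of_gt (pow_sub_one_pos hθ hj1)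
    have hne2 : θ - 1 ≠ 0 := by linarith
    have hne3 : tA (j + 1) θ - 1 ≠ 0 := ne_of_gt (g_pos hθ hj1)
    rw [eq_div_iff hne3, tA_eq hθ]
    field_simp
    ring
  rw [mul_comm (∏ i ∈ Finset.Ico k N, (θ * (θ ^ i - 1) / (θ ^ (i + 1) - 1))),
    mul_assoc, ← Finset.prod_mul_distrib, Finset.sum_congr rfl h2,
    Finset.prod_congr rfl h1]

end ratio

section limits
variable {θ : ℝ} {k : ℕ}

lemma prod_telescope (hθ : 1 < θ) (hk : 1 ≤ k) {N : ℕ} (hkN : k ≤ N) :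
    ∏ i ∈ Finset.Ico k N, (θ * (θ ^ i - 1) / (θ ^ (i + 1) - 1)) =
      θ ^ (N - k) * (θ ^ k - 1) / (θ ^ N - 1) := by
  induction N, hkN using Nat.le_induction with
  | base =>
    simp only [Finset.Ico_self, Finset.prod_empty, Nat.sub_self, pow_zero, one_mul]
    rw [div_self (ne_of_gt (pow_sub_one_pos hθ hk))]
  | succ N hN ih =>
    rw [Finset.prod_Ico_succ_top hN, ih]
    have h1 : θ ^ N - 1 ≠ 0 := ne_of_gt (pow_sub_one_pos hθ (le_trans hk hN))
    have h2 : θ ^ (N + 1) - 1 ≠ 0 := ne_of_gt (pow_sub_one_pos hθ (by omega))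
    have h3 : N + 1 - k = (N - k) + 1 := by omega
    rw [h3, pow_succ θ (N - k), pow_succ θ N]
    rw [pow_succ θ N] at h2
    rw [div_mul_div_comm, div_eq_div_iff (mul_ne_zero h1 h2) h2]
    ring

lemma tendsto_prod_part (hθ : 1 < θ) (hk : 1 ≤ k) :
    Filter.Tendsto (fun N => θ ^ (N - k) * (θ ^ k - 1) / (θ ^ N - 1))
      Filter.atTop (nhds ((θ ^ k - 1) / θ ^ k)) := by
  have hθ0 : (0:ℝ) < θ := by linarith
  have hpow : Filter.Tendsto (fun N : ℕ => (θ ^ N)⁻¹) Filter.atTop (nhds 0) :=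
    (tendsto_pow_atTop_atTop_of_one_lt hθ).inv_tendsto_atTop
  have hden : Filter.Tendsto (fun N : ℕ => θ ^ k - θ ^ k * (θ ^ N)⁻¹)
      Filter.atTop (nhds (θ ^ k)) := by
    have := (tendsto_const_nhds (x := θ ^ k) (f := Filter.atTop (α := ℕ))).sub
      ((tendsto_const_nhds (x := θ ^ k) (f := Filter.atTop (α := ℕ))).mul hpow)
    simpa using this
  have hmain : Filter.Tendsto (fun N : ℕ => (θ ^ k - 1) / (θ ^ k - θ ^ k * (θ ^ N)⁻¹))
      Filter.atTop (nhds ((θ ^ k - 1) / θ ^ k)) :=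
    Filter.Tendsto.div tendsto_const_nhds hden (ne_of_gt (pow_pos hθ0 k))
  apply hmain.congr'
  filter_upwards [Filter.eventually_ge_atTop k] with N hkN
  have hcN : θ ^ N ≠ 0 := ne_of_gt (pow_pos hθ0 N)
  have hd1 : θ ^ N - 1 ≠ 0 := ne_of_gt (pow_sub_one_pos hθ (le_trans hk hkN))
  have hd2 : θ ^ k - θ ^ k * (θ ^ N)⁻¹ ≠ 0 := by
    have h1 : 1 < θ ^ N := one_lt_pow₀ hθ (by omega)
    have h2 : (θ ^ N)⁻¹ < 1 := by
      rw [inv_lt_one_iff₀]; right; exact h1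
    have h3 : θ ^ k * (θ ^ N)⁻¹ < θ ^ k * 1 := by
      apply mul_lt_mul_of_pos_left h2 (pow_pos hθ0 k)
    have := pow_pos hθ0 k
    nlinarith [mul_pos (pow_pos hθ0 k) (inv_pos.2 (pow_pos hθ0 N))]
  have hak : θ ^ (N - k) * θ ^ k = θ ^ N := by
    rw [← pow_add]; congr 1; omega
  rw [div_eq_div_iff hd2 hd1, ← hak]
  have hA : θ ^ (N - k) ≠ 0 := ne_of_gt (pow_pos hθ0 _)
  have hB : θ ^ k ≠ 0 := ne_of_gt (pow_pos hθ0 _)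
  field_simp

lemma summable_aux (hθ : 1 < θ) (hk : 1 ≤ k) :
    Summable (fun i : ℕ => (1 : ℝ) / (θ ^ (i + k) - 1)) := by
  have hθ0 : (0:ℝ) < θ := by linarith
  have hgeo : Summable (fun i : ℕ => (1 / (θ ^ k - 1)) * (θ⁻¹) ^ i) := by
    apply Summable.mul_left
    apply summable_geometric_of_lt_one (by positivity)
    rw [inv_lt_one_iff₀]; right; exact hθ
  apply Summable.of_nonneg_of_le _ _ hgeo
  · intro i
    have := pow_sub_one_pos hθ (show 1 ≤ i + k by omega)
    positivity
  · intro i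
    have h1 : 0 < θ ^ (i + k) - 1 := pow_sub_one_pos hθ (by omega)
    have h2 : 0 < θ ^ k - 1 := pow_sub_one_pos hθ hk
    have h3 : 0 < θ ^ i := pow_pos hθ0 i
    have hle : θ ^ i * (θ ^ k - 1) ≤ θ ^ (i + k) - 1 := by
      have h4 : (1:ℝ) ≤ θ ^ i := one_le_pow₀ (le_of_lt hθ)
      have h5 : θ ^ (i + k) = θ ^ i * θ ^ k := pow_add θ i k
      nlinarith
    rw [div_le_iff₀ h1]
    calc (1 / (θ ^ k - 1)) * (θ⁻¹) ^ i * (θ ^ (i + k) - 1)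
        ≥ (1 / (θ ^ k - 1)) * (θ⁻¹) ^ i * (θ ^ i * (θ ^ k - 1)) := by
          apply mul_le_mul_of_nonneg_left hle
          positivity
      _ = 1 := by
          rw [inv_pow]
          field_simp
  -- note : calc direction

lemma tendsto_sum_part (hθ : 1 < θ) (hk : 1 ≤ k) :
    Filter.Tendsto (fun N => ∑ j ∈ Finset.Ico k N, ((θ - 1) / (θ * (θ ^ j - 1))))
      Filter.atTop
      (nhds ((θ - 1) / θ * ∑' i : ℕ, (1 : ℝ) / (θ ^ (i + k) - 1))) := by
  have hθ0 : (0:ℝ) < θ := by linarith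
  have hbase : Filter.Tendsto
      (fun n : ℕ => ∑ i ∈ Finset.range n, (1 : ℝ) / (θ ^ (i + k) - 1))
      Filter.atTop (nhds (∑' i : ℕ, (1 : ℝ) / (θ ^ (i + k) - 1))) :=
    (summable_aux hθ hk).hasSum.tendsto_sum_nat
  have hcomp := hbase.comp (Filter.tendsto_sub_atTop_nat k)
  have hmul := hcomp.const_mul ((θ - 1) / θ)
  apply hmul.congr
  intro N
  simp only [Function.comp]
  rw [Finset.mul_sum]
  rw [Finset.sum_Ico_eq_sum_range]
  refine Finset.sum_congr rfl fun i _ => ?_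
  have h1 : θ ^ (k + i) - 1 ≠ 0 := ne_of_gt (pow_sub_one_pos hθ (by omega))
  rw [add_comm k i]
  rw [div_mul_div_comm, mul_one]

theorem main_limit_aux (θ : ℝ) (hθ : 1 < θ) (k : ℕ) (hk : 1 ≤ k) :
    Summable (fun i : ℕ => (1 : ℝ) / (θ ^ (i + k) - 1)) ∧
    Filter.Tendsto (fun N => WM N k θ / qfact N θ) Filter.atTop
      (nhds ((θ - 1) * ((θ ^ k - 1) / θ ^ (k + 1)) *
        ∑' i : ℕ, (1 : ℝ) / (θ ^ (i + k) - 1))) := by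
  refine ⟨summable_aux hθ hk, ?_⟩
  have hT := (tendsto_prod_part hθ hk).mul (tendsto_sum_part hθ hk)
  have hval : (θ ^ k - 1) / θ ^ k * ((θ - 1) / θ * ∑' i : ℕ, (1 : ℝ) / (θ ^ (i + k) - 1))
      = (θ - 1) * ((θ ^ k - 1) / θ ^ (k + 1)) * ∑' i : ℕ, (1 : ℝ) / (θ ^ (i + k) - 1) := by
    rw [pow_succ]
    ring
  rw [hval] at hT
  apply hT.congr'
  filter_upwards [Filter.eventually_ge_atTop k] with N hkN
  rw [ratio_eq hθ hk hkN, prod_telescope hθ hk hkN]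

end limits

/-- in the Mallows model with fixed `θ > 1` and fixed `k ≥ 1`, the
series `Σ_{i=k}^{∞} 1/(θ^i − 1)` converges and
`lim_{N→∞} W(N,k)/[N]_θ! = (θ−1)·((θ^k−1)/θ^{k+1})·Σ_{i=k}^{∞} 1/(θ^i−1)`. -/
theorem mallows_left_justified_limit (θ : ℝ) (hθ : 1 < θ) (k : ℕ) (hk : 1 ≤ k) :
    Summable (fun i : ℕ => (1 : ℝ) / (θ ^ (i + k) - 1)) ∧
    Filter.Tendsto (fun N => WM N k θ / qfact N θ) Filter.atTop
      (nhds ((θ - 1) * ((θ ^ k - 1) / θ ^ (k + 1)) *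
        ∑' i : ℕ, (1 : ℝ) / (θ ^ (i + k) - 1))) :=
  main_limit_aux θ hθ k hk
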